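/- For every κ > 0 there exists a positive constant C₁ depending only on κ such that for all α > 0 and β > 0 one has ∫_{[0,∞)} x^κ m_{α,β}(dx) ≤ C₁ (1 + α^κ)/β^κ. -/

import Mathlib

open MeasureTheory Filter Set
open scoped ENNReal

/-- The modified Bessel function of the first kind of order one,
`I₁(r) = (r/2) Σ_{k=0}^∞ (r²/4)^k / (k!(k+1)!)`. -/
noncomputable def besselI1 (r : ℝ) : ℝ :=
  r / 2 * ∑' k : ℕ, (r ^ 2 / 4) ^ k / ((Nat.factorial k : ℝ) * (Nat.factorial (k + 1) : ℝ))

/-- The Bessel distribution `m_{α,β}` on `[0,∞)`: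
`m_{α,β}(dx) = e^{−α} δ₀(dx) + β e^{−α−βx} √(α/(βx)) I₁(2√(αβx)) dx`. -/
noncomputable def besselMeasure (α β : ℝ) : Measure ℝ :=
  ENNReal.ofReal (Real.exp (-α)) • Measure.dirac (0 : ℝ) +
    MeasureTheory.volume.withDensity fun x =>
      ENNReal.ofReal (Set.indicator (Set.Ioi (0 : ℝ))
        (fun x => β * Real.exp (-α - β * x) * Real.sqrt (α / (β * x)) *
          besselI1 (2 * Real.sqrt (α * β * x))) x)

lemma summable_aux (y : ℝ) (hy : 0 ≤ y) :
    Summable fun k : ℕ => y ^ k / ((Nat.factorial k : ℝ) * (Nat.factorial (k + 1) : ℝ)) := by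
  refine Summable.of_nonneg_of_le (fun k => by positivity)
    (fun k => ?_) (Real.summable_pow_div_factorial y)
  have h1 : (1 : ℝ) ≤ (Nat.factorial (k+1) : ℝ) := Nat.one_le_cast.mpr (Nat.factorial_pos _)
  rw [div_le_div_iff₀ (by positivity) (by positivity)]
  have h2 : (k.factorial : ℝ) ≤ k.factorial * (k+1).factorial :=
    le_mul_of_one_le_right (by positivity) h1
  exact mul_le_mul_of_nonneg_left h2 (pow_nonneg hy k)

lemma density_series {α β : ℝ} (hα : 0 < α) (hβ : 0 < β) {x : ℝ} (hx : 0 < x) :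
    β * Real.exp (-α - β * x) * Real.sqrt (α / (β * x)) * besselI1 (2 * Real.sqrt (α * β * x))
      = ∑' k : ℕ, Real.exp (-α) * (α * β) ^ (k + 1) * x ^ k * Real.exp (-(β * x)) /
          ((Nat.factorial k : ℝ) * (Nat.factorial (k + 1) : ℝ)) := by
  have hy : (0:ℝ) ≤ α * β * x := by positivity
  have h1 : besselI1 (2 * Real.sqrt (α * β * x)) =
      Real.sqrt (α * β * x) * ∑' k : ℕ, (α * β * x) ^ k /
        ((Nat.factorial k : ℝ) * (Nat.factorial (k + 1) : ℝ)) := by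
    unfold besselI1
    rw [mul_pow, Real.sq_sqrt hy]
    ring_nf
  have h2 : Real.sqrt (α / (β * x)) * Real.sqrt (α * β * x) = α := by
    rw [← Real.sqrt_mul (by positivity)]
    rw [show α / (β * x) * (α * β * x) = α ^ 2 by field_simp]
    exact Real.sqrt_sq hα.le
  have h3 : Real.exp (-α - β * x) = Real.exp (-α) * Real.exp (-(β * x)) := by
    rw [← Real.exp_add]; ring_nf
  rw [h1]
  set S := ∑' k : ℕ, (α * β * x) ^ k / ((Nat.factorial k : ℝ) * (Nat.factorial (k + 1) : ℝ)) with hS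
  calc β * Real.exp (-α - β * x) * Real.sqrt (α / (β * x)) * (Real.sqrt (α * β * x) * S)
      = (Real.sqrt (α / (β * x)) * Real.sqrt (α * β * x)) * (β * Real.exp (-α - β * x) * S) := by
        ring
    _ = α * (β * Real.exp (-α - β * x) * S) := by rw [h2]
    _ = ∑' k : ℕ, Real.exp (-α) * (α * β) ^ (k + 1) * x ^ k * Real.exp (-(β * x)) /
          ((Nat.factorial k : ℝ) * (Nat.factorial (k + 1) : ℝ)) := by
        rw [show α * (β * Real.exp (-α - β * x) * S) =
            (α * β * Real.exp (-α - β * x)) * S by ring, hS, ← tsum_mul_left]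
        refine tsum_congr fun k => ?_
        rw [h3]; ring

/-- the `k`-th term of the series, as an `ℝ≥0∞`-valued function -/
noncomputable def bTerm (α β : ℝ) (k : ℕ) (x : ℝ) : ℝ≥0∞ :=
  ENNReal.ofReal (Real.exp (-α) * (α * β) ^ (k + 1) * x ^ k * Real.exp (-(β * x)) /
    ((Nat.factorial k : ℝ) * (Nat.factorial (k + 1) : ℝ)))

lemma bTerm_measurable (α β : ℝ) (k : ℕ) : Measurable (bTerm α β k) := by
  apply ENNReal.measurable_ofReal.comp
  fun_prop

lemma summable_term {α β : ℝ} (hα : 0 < α) (hβ : 0 < β) {x : ℝ} (hx : 0 < x) :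
    Summable fun k : ℕ => Real.exp (-α) * (α * β) ^ (k + 1) * x ^ k * Real.exp (-(β * x)) /
      ((Nat.factorial k : ℝ) * (Nat.factorial (k + 1) : ℝ)) := by
  have h := (summable_aux (α * β * x) (by positivity)).mul_left
    (Real.exp (-α) * (α * β) * Real.exp (-(β * x)))
  refine h.congr fun k => ?_
  rw [mul_pow, pow_succ]
  ring

lemma density_fun_eq {α β : ℝ} (hα : 0 < α) (hβ : 0 < β) :
    (fun x => ENNReal.ofReal (Set.indicator (Set.Ioi (0 : ℝ))
        (fun x => β * Real.exp (-α - β * x) * Real.sqrt (α / (β * x)) *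
          besselI1 (2 * Real.sqrt (α * β * x))) x))
      = Set.indicator (Set.Ioi (0 : ℝ)) (fun x => ∑' k : ℕ, bTerm α β k x) := by
  funext x
  by_cases hx : x ∈ Set.Ioi (0 : ℝ)
  · rw [Set.indicator_of_mem hx, Set.indicator_of_mem hx, density_series hα hβ hx]
    have hx' : (0:ℝ) < x := hx
    exact ENNReal.ofReal_tsum_of_nonneg (fun k => by positivity) (summable_term hα hβ hx)
  · rw [Set.indicator_of_notMem hx, Set.indicator_of_notMem hx, ENNReal.ofReal_zero]

lemma integrableOn_pow_exp (k : ℕ) {c : ℝ} (hc : 0 < c) :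
    IntegrableOn (fun x : ℝ => x ^ k * Real.exp (-(c * x))) (Set.Ioi 0) := by
  have h2 : (fun x : ℝ => x ^ k * Real.exp (-(c * x))) =O[atTop]
      fun x => Real.exp (-(c / 2) * x) := by
    have ht := tendsto_rpow_mul_exp_neg_mul_atTop_nhds_zero (k : ℝ) (c / 2) (by linarith)
    rw [Asymptotics.isBigO_iff]
    refine ⟨1, ?_⟩
    have h3 := ht.eventually (eventually_abs_sub_lt 0 one_pos)
    filter_upwards [h3, eventually_gt_atTop (0 : ℝ)] with x hx hx0
    rw [sub_zero] at hx
    have hxk : x ^ k = x ^ (k : ℝ) := (Real.rpow_natCast x k).symm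
    have hsplit : Real.exp (-(c * x)) = Real.exp (-(c / 2) * x) * Real.exp (-(c / 2) * x) := by
      rw [← Real.exp_add]; ring_nf
    rw [Real.norm_eq_abs, Real.norm_eq_abs, one_mul, abs_of_pos (Real.exp_pos _), hsplit,
      show x ^ k * (Real.exp (-(c / 2) * x) * Real.exp (-(c / 2) * x)) =
        x ^ k * Real.exp (-(c / 2) * x) * Real.exp (-(c / 2) * x) by ring,
      abs_mul, abs_of_pos (Real.exp_pos _), hxk]
    simpa using mul_le_mul_of_nonneg_right hx.le (Real.exp_pos (-(c / 2) * x)).le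
  exact integrable_of_isBigO_exp_neg (by linarith : (0:ℝ) < c / 2) (by fun_prop) h2

lemma lintegral_pow_exp (k : ℕ) {c : ℝ} (hc : 0 < c) :
    ∫⁻ x in Set.Ioi (0 : ℝ), ENNReal.ofReal (x ^ k * Real.exp (-(c * x))) =
      ENNReal.ofReal ((Nat.factorial k : ℝ) / c ^ (k + 1)) := by
  rw [← ofReal_integral_eq_lintegral_ofReal (integrableOn_pow_exp k hc)]
  · congr 1
    have h := Real.integral_rpow_mul_exp_neg_mul_Ioi (a := (k : ℝ) + 1) (r := c)
      (by positivity) hc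
    rw [show ((k : ℝ) + 1 - 1) = (k : ℝ) by ring] at h
    have heq : ∫ x in Set.Ioi (0:ℝ), x ^ k * Real.exp (-(c * x)) =
        ∫ x in Set.Ioi (0:ℝ), x ^ (k : ℝ) * Real.exp (-(c * x)) := by
      refine setIntegral_congr_fun measurableSet_Ioi fun x hx => ?_
      rw [Real.rpow_natCast]
    rw [heq, h, Real.Gamma_nat_eq_factorial,
      show ((k : ℝ) + 1) = ((k + 1 : ℕ) : ℝ) by push_cast; ring,
      Real.rpow_natCast, one_div, inv_pow]
    field_simp
  · refine (ae_restrict_iff' measurableSet_Ioi).mpr (Filter.Eventually.of_forall fun x hx => ?_)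
    have hx' : (0:ℝ) < x := hx
    positivity

lemma exp_tsum (y : ℝ) : Real.exp y = ∑' n : ℕ, y ^ n / (Nat.factorial n : ℝ) := by
  rw [Real.exp_eq_exp_ℝ, NormedSpace.exp_eq_tsum_div]

lemma core_bound {α β lam : ℝ} (hα : 0 < α) (hβ : 0 < β) (hl : 0 < lam) (hlb : lam < β) :
    ∫⁻ x in Set.Ioi (0 : ℝ),
        ENNReal.ofReal (Real.exp (lam * x)) * (∑' k : ℕ, bTerm α β k x)
      ≤ ENNReal.ofReal (Real.exp (α * lam / (β - lam))) := by
  have hc : 0 < β - lam := sub_pos.mpr hlb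
  set y : ℝ := α * β / (β - lam) with hy
  have hy0 : 0 < y := by positivity
  calc ∫⁻ x in Set.Ioi (0 : ℝ),
        ENNReal.ofReal (Real.exp (lam * x)) * (∑' k : ℕ, bTerm α β k x)
      = ∑' k : ℕ, ∫⁻ x in Set.Ioi (0 : ℝ),
          ENNReal.ofReal (Real.exp (lam * x)) * bTerm α β k x := by
        simp_rw [← ENNReal.tsum_mul_left]
        exact lintegral_tsum fun k =>
          ((ENNReal.measurable_ofReal.comp (by fun_prop)).mul
            (bTerm_measurable α β k)).aemeasurable
    _ = ∑' k : ℕ, ENNReal.ofReal (Real.exp (-α) * y ^ (k + 1) / (Nat.factorial (k+1) : ℝ)) := by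
        refine tsum_congr fun k => ?_
        have hpt : ∀ x ∈ Set.Ioi (0:ℝ),
            ENNReal.ofReal (Real.exp (lam * x)) * bTerm α β k x =
            ENNReal.ofReal (Real.exp (-α) * (α * β) ^ (k + 1) /
              ((Nat.factorial k : ℝ) * (Nat.factorial (k + 1) : ℝ))) *
              ENNReal.ofReal (x ^ k * Real.exp (-((β - lam) * x))) := by
          intro x hx
          rw [bTerm, ← ENNReal.ofReal_mul (Real.exp_pos _).le, ← ENNReal.ofReal_mul (by positivity)]
          congr 1
          have hee : Real.exp (lam * x) * Real.exp (-(β * x)) = Real.exp (-((β - lam) * x)) := by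
            rw [← Real.exp_add]; ring_nf
          field_simp
          rw [show -(x * (β - lam)) = -((β - lam) * x) by ring, ← hee,
            show -(x * β) = -(β * x) by ring]
          ring
        rw [setLIntegral_congr_fun measurableSet_Ioi hpt,
          lintegral_const_mul _ (by fun_prop), lintegral_pow_exp k hc,
          ← ENNReal.ofReal_mul (by positivity)]
        congr 1
        rw [hy, div_pow]
        have hkf : (Nat.factorial k : ℝ) ≠ 0 := Nat.cast_ne_zero.mpr (Nat.factorial_ne_zero k)
        field_simp
    _ ≤ ∑' n : ℕ, ENNReal.ofReal (Real.exp (-α) * y ^ n / (Nat.factorial n : ℝ)) := by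
        exact ENNReal.tsum_comp_le_tsum_of_injective (add_left_injective 1)
          fun n => ENNReal.ofReal (Real.exp (-α) * y ^ n / (Nat.factorial n : ℝ))
    _ = ENNReal.ofReal (∑' n : ℕ, Real.exp (-α) * y ^ n / (Nat.factorial n : ℝ)) :=
        (ENNReal.ofReal_tsum_of_nonneg (fun n => by positivity)
          (((Real.summable_pow_div_factorial y).mul_left (Real.exp (-α))).congr
            fun n => (mul_div_assoc _ _ _).symm)).symm
    _ = ENNReal.ofReal (Real.exp (α * lam / (β - lam))) := by
        have hsum : ∑' n : ℕ, Real.exp (-α) * y ^ n / (Nat.factorial n : ℝ) =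
            Real.exp (-α) * Real.exp y := by
          rw [exp_tsum y, ← tsum_mul_left]
          exact tsum_congr fun n => mul_div_assoc _ _ _
        rw [hsum, ← Real.exp_add]
        congr 1
        rw [hy]
        field_simp
        ring

lemma rpow_le_exp_aux {κ lam x : ℝ} (hκ : 0 < κ) (hl : 0 < lam) (hx : 0 < x) :
    x ^ κ ≤ (κ / lam) ^ κ * Real.exp (lam * x - κ) := by
  have h1 : Real.log (lam * x / κ) ≤ lam * x / κ - 1 :=
    Real.log_le_sub_one_of_pos (by positivity)
  have hlog : Real.log (lam * x / κ) = Real.log lam + Real.log x - Real.log κ := by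
    rw [Real.log_div (by positivity) hκ.ne', Real.log_mul hl.ne' hx.ne']
  rw [hlog] at h1
  have h2 := mul_le_mul_of_nonneg_left h1 hκ.le
  have h3 : κ * (lam * x / κ - 1) = lam * x - κ := by field_simp
  rw [h3] at h2
  calc x ^ κ = Real.exp (Real.log x * κ) := Real.rpow_def_of_pos hx κ
    _ ≤ Real.exp (Real.log (κ / lam) * κ + (lam * x - κ)) := by
        apply Real.exp_le_exp.mpr
        rw [Real.log_div hκ.ne' hl.ne']
        nlinarith
    _ = (κ / lam) ^ κ * Real.exp (lam * x - κ) := by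
        rw [Real.exp_add, ← Real.rpow_def_of_pos (by positivity)]

theorem bessel_moment_upper_bound (κ : ℝ) (hκ : 0 < κ) :
    ∃ C₁ : ℝ, 0 < C₁ ∧ ∀ α β : ℝ, 0 < α → 0 < β →
      (∫⁻ x, ENNReal.ofReal (x ^ κ) ∂ besselMeasure α β) ≤
        ENNReal.ofReal (C₁ * (1 + α ^ κ) / β ^ κ) := by
  refine ⟨Real.exp κ * ((2 * κ) ^ κ + 1), by positivity, fun α β hα hβ => ?_⟩
  set M : ℝ := max 2 (α / κ) with hM
  have hM2 : (2 : ℝ) ≤ M := le_max_left _ _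
  have hM0 : (0 : ℝ) < M := by linarith
  set lam : ℝ := β / M with hlam
  have hl : 0 < lam := by positivity
  have hlb : lam < β := div_lt_self hβ (by linarith)
  have hhalf : β / 2 ≤ β - lam := by
    have : lam ≤ β / 2 := by
      rw [hlam]
      exact div_le_div_of_nonneg_left hβ.le two_pos hM2
    linarith
  -- the exponent bound
  have hexp : α * lam / (β - lam) ≤ 2 * κ := by
    have h1 : α * lam / (β - lam) ≤ α * lam / (β / 2) :=
      div_le_div_of_nonneg_left (by positivity) (by positivity) hhalf
    have h2 : α * lam / (β / 2) = 2 * (α / M) := by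
      rw [hlam]; field_simp
    have h3 : α / M ≤ κ := by
      rw [div_le_iff₀ hM0]
      calc α = κ * (α / κ) := by field_simp
        _ ≤ κ * M := by
          exact mul_le_mul_of_nonneg_left (le_max_right _ _) hκ.le
    linarith
  -- measurability
  have hF : Measurable fun x : ℝ => ENNReal.ofReal (x ^ κ) := by
    apply ENNReal.measurable_ofReal.comp
    fun_prop
  have hG : Measurable fun x : ℝ => ∑' k : ℕ, bTerm α β k x :=
    Measurable.ennreal_tsum fun k => bTerm_measurable α β k
  have hd : Measurable (Set.indicator (Set.Ioi (0 : ℝ))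
      (fun x => ∑' k : ℕ, bTerm α β k x)) := hG.indicator measurableSet_Ioi
  set D : ℝ := (κ / lam) ^ κ * Real.exp (-κ) with hD
  have hD0 : 0 ≤ D := by positivity
  -- the pointwise bound
  have hpt : ∀ x ∈ Set.Ioi (0 : ℝ),
      (∑' k : ℕ, bTerm α β k x) * ENNReal.ofReal (x ^ κ) ≤
        ENNReal.ofReal D * (ENNReal.ofReal (Real.exp (lam * x)) *
          (∑' k : ℕ, bTerm α β k x)) := by
    intro x hx
    have hx' : (0 : ℝ) < x := hx
    have hb := rpow_le_exp_aux hκ hl hx'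
    have : ENNReal.ofReal (x ^ κ) ≤ ENNReal.ofReal D * ENNReal.ofReal (Real.exp (lam * x)) := by
      rw [← ENNReal.ofReal_mul hD0]
      apply ENNReal.ofReal_le_ofReal
      calc x ^ κ ≤ (κ / lam) ^ κ * Real.exp (lam * x - κ) := hb
        _ = D * Real.exp (lam * x) := by
            rw [hD, Real.exp_sub, Real.exp_neg]
            field_simp
    calc (∑' k : ℕ, bTerm α β k x) * ENNReal.ofReal (x ^ κ)
        ≤ (∑' k : ℕ, bTerm α β k x) * (ENNReal.ofReal D * ENNReal.ofReal (Real.exp (lam * x))) :=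
        mul_le_mul_right this _
      _ = ENNReal.ofReal D * (ENNReal.ofReal (Real.exp (lam * x)) * (∑' k : ℕ, bTerm α β k x)) := by
        ring
  -- compute the integral against the measure
  rw [besselMeasure, density_fun_eq hα hβ, lintegral_add_measure, lintegral_smul_measure,
    lintegral_dirac' _ hF, lintegral_withDensity_eq_lintegral_mul _ hd hF]
  have h0 : ENNReal.ofReal ((0 : ℝ) ^ κ) = 0 := by
    rw [Real.zero_rpow hκ.ne', ENNReal.ofReal_zero]
  rw [h0, smul_zero, zero_add]
  have hind : (fun x => (Set.indicator (Set.Ioi (0 : ℝ))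
        (fun x => ∑' k : ℕ, bTerm α β k x) * fun x => ENNReal.ofReal (x ^ κ)) x)
      = Set.indicator (Set.Ioi (0 : ℝ))
        (fun x => (∑' k : ℕ, bTerm α β k x) * ENNReal.ofReal (x ^ κ)) := by
    funext x
    simp only [Pi.mul_apply]
    rw [Set.indicator_mul_left]
  rw [hind, lintegral_indicator measurableSet_Ioi]
  calc ∫⁻ x in Set.Ioi (0 : ℝ), (∑' k : ℕ, bTerm α β k x) * ENNReal.ofReal (x ^ κ)
      ≤ ∫⁻ x in Set.Ioi (0 : ℝ), ENNReal.ofReal D *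
          (ENNReal.ofReal (Real.exp (lam * x)) * (∑' k : ℕ, bTerm α β k x)) :=
        setLIntegral_mono' measurableSet_Ioi hpt
    _ = ENNReal.ofReal D * ∫⁻ x in Set.Ioi (0 : ℝ),
          ENNReal.ofReal (Real.exp (lam * x)) * (∑' k : ℕ, bTerm α β k x) :=
        lintegral_const_mul _ ((ENNReal.measurable_ofReal.comp (by fun_prop)).mul hG)
    _ ≤ ENNReal.ofReal D * ENNReal.ofReal (Real.exp (α * lam / (β - lam))) :=
        mul_le_mul_right (core_bound hα hβ hl hlb) _
    _ ≤ ENNReal.ofReal D * ENNReal.ofReal (Real.exp (2 * κ)) :=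
        mul_le_mul_right (ENNReal.ofReal_le_ofReal (Real.exp_le_exp.mpr hexp)) _
    _ ≤ ENNReal.ofReal (Real.exp κ * ((2 * κ) ^ κ + 1) * (1 + α ^ κ) / β ^ κ) := by
        rw [← ENNReal.ofReal_mul hD0]
        apply ENNReal.ofReal_le_ofReal
        have hkl : κ / lam = κ * M / β := by rw [hlam]; field_simp
        have hDE : D * Real.exp (2 * κ) = (κ * M) ^ κ / β ^ κ * Real.exp κ := by
          rw [hD, hkl, Real.div_rpow (by positivity) hβ.le, mul_assoc, ← Real.exp_add,
            show -κ + 2 * κ = κ by ring]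
        rw [hDE]
        have hmax : (κ * M) ^ κ ≤ (2 * κ) ^ κ + α ^ κ := by
          have hMeq : κ * M = max (2 * κ) α := by
            rw [hM, mul_max_of_nonneg _ _ hκ.le]
            congr 1
            · ring
            · field_simp
          rw [hMeq]
          rcases max_cases (2 * κ) α with ⟨h1, _⟩ | ⟨h1, _⟩ <;> rw [h1]
          · nlinarith [Real.rpow_nonneg hα.le κ]
          · nlinarith [Real.rpow_nonneg (by positivity : (0:ℝ) ≤ 2 * κ) κ]
        have he : (0:ℝ) < Real.exp κ := Real.exp_pos _
        have ha : (0:ℝ) ≤ α ^ κ := Real.rpow_nonneg hα.le κ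
        have h2 : (0:ℝ) ≤ (2 * κ) ^ κ := Real.rpow_nonneg (by positivity) κ
        have hbb : (0:ℝ) < β ^ κ := Real.rpow_pos_of_pos hβ κ
        have key : (κ * M) ^ κ * Real.exp κ ≤ Real.exp κ * ((2 * κ) ^ κ + 1) * (1 + α ^ κ) := by
          nlinarith [mul_le_mul_of_nonneg_right hmax he.le,
            mul_nonneg (mul_nonneg he.le h2) ha]
        rw [div_mul_eq_mul_div]
        gcongr
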